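/- Let k be a field, V a 3-dimensional k-vector space, G a group, and ρ : G → GL(V) a homomorphism with no G-invariant subspace other than 0 and V. Let N be a normal subgroup of G and suppose V = L₁ ⊕ L₂ ⊕ L₃ where L₁, L₂, L₃ are 1-dimensional subspaces and there are pairwise distinct characters χ₁, χ₂, χ₃ : N → kˣ with ρ(h)v = χᵢ(h)·v for all h ∈ N and v ∈ Lᵢ (i = 1, 2, 3). Then H := {g ∈ G : ρ(g)L₁ = L₁} is a subgroup of G of index 3 containing N, and there exist g₂, g₃ ∈ G with ρ(g₂)L₁ = L₂ and ρ(g₃)L₁ = L₃ (so V = L₁ ⊕ ρ(g₂)L₁ ⊕ ρ(g₃)L₁). (This is the Clifford-theoretic core of the paper's proof that the Galois representation attached to a non-self-twist regular algebraic cuspidal automorphic representation of GL₃ is strongly irreducible: if the restriction to an open normal subgroup splits as three distinct characters, G permutes the lines transitively and the representation is induced from an index-3 subgroup.) -/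

import Mathlib

private lemma line_eq_line_aux {k V : Type*} [Field k] [AddCommGroup V] [Module k V]
    (W L : Submodule k V) [FiniteDimensional k W] [FiniteDimensional k L]
    (hW : Module.finrank k W = 1) (hL : Module.finrank k L = 1)
    {w : V} (hw : w ≠ 0) (hwW : w ∈ W) (hwL : w ∈ L) : W = L := by
  have h1 : (k ∙ w) = W := Submodule.eq_of_le_of_finrank_le
    ((Submodule.span_singleton_le_iff_mem w W).mpr hwW) (by rw [finrank_span_singleton hw, hW])
  have h2 : (k ∙ w) = L := Submodule.eq_of_le_of_finrank_le
    ((Submodule.span_singleton_le_iff_mem w L).mpr hwL) (by rw [finrank_span_singleton hw, hL])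
  rw [← h1, h2]

/-- let `ρ` be an irreducible 3-dimensional representation of `G` whose
restriction to a normal subgroup `N` splits as a direct sum of three lines on which `N`
acts by pairwise distinct characters. Then the stabilizer of the first line is an
index-3 subgroup `H` of `G` containing `N`, and there are `g₂, g₃ ∈ G` carrying the
first line onto the second and third lines respectively. -/
theorem induced_from_index_three_of_three_characters
    {k V : Type*} [Field k] [AddCommGroup V] [Module k V]
    {G : Type*} [Group G]
    (hdim : Module.finrank k V = 3)
    (ρ : G →* (V ≃ₗ[k] V))
    (hirr : ∀ W : Submodule k V, (∀ g : G, ∀ v ∈ W, ρ g v ∈ W) → W = ⊥ ∨ W = ⊤)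
    (N : Subgroup G) [N.Normal]
    (L₁ L₂ L₃ : Submodule k V)
    (hL₁ : Module.finrank k L₁ = 1) (hL₂ : Module.finrank k L₂ = 1)
    (hL₃ : Module.finrank k L₃ = 1)
    (hcompl : IsCompl L₁ (L₂ ⊔ L₃)) (hcompl' : IsCompl L₂ L₃)
    (χ₁ χ₂ χ₃ : N →* kˣ)
    (hne₁₂ : χ₁ ≠ χ₂) (hne₁₃ : χ₁ ≠ χ₃) (hne₂₃ : χ₂ ≠ χ₃)
    (h₁ : ∀ h : N, ∀ v ∈ L₁, ρ (h : G) v = χ₁ h • v)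
    (h₂ : ∀ h : N, ∀ v ∈ L₂, ρ (h : G) v = χ₂ h • v)
    (h₃ : ∀ h : N, ∀ v ∈ L₃, ρ (h : G) v = χ₃ h • v) :
    ∃ H : Subgroup G,
      (∀ g : G, g ∈ H ↔ Submodule.map (ρ g : V →ₗ[k] V) L₁ = L₁) ∧
      H.index = 3 ∧ N ≤ H ∧
      ∃ g₂ g₃ : G, Submodule.map (ρ g₂ : V →ₗ[k] V) L₁ = L₂ ∧ Submodule.map (ρ g₃ : V →ₗ[k] V) L₁ = L₃ := by
  haveI : FiniteDimensional k V := FiniteDimensional.of_finrank_eq_succ (n := 2) hdim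
  -- basic nondegeneracy
  have hbot : ∀ (L : Submodule k V), Module.finrank k L = 1 → L ≠ ⊥ := by
    intro L hL h
    rw [h, finrank_bot] at hL
    exact one_ne_zero hL.symm
  have d12 : Disjoint L₁ L₂ :=
    hcompl.disjoint.mono_right (le_sup_left : L₂ ≤ L₂ ⊔ L₃)
  have d13 : Disjoint L₁ L₃ :=
    hcompl.disjoint.mono_right (le_sup_right : L₃ ≤ L₂ ⊔ L₃)
  have hne12 : L₁ ≠ L₂ := by
    intro h
    rw [← h] at d12
    exact hbot L₁ hL₁ (disjoint_self.mp d12)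
  have hne13 : L₁ ≠ L₃ := by
    intro h
    rw [← h] at d13
    exact hbot L₁ hL₁ (disjoint_self.mp d13)
  have hne23 : L₂ ≠ L₃ := by
    intro h
    have d23 := hcompl'.disjoint
    rw [← h] at d23
    exact hbot L₂ hL₂ (disjoint_self.mp d23)
  -- an N-eigenvector lies in one of the three lines
  have eig : ∀ (c : N → kˣ) (w : V), w ≠ 0 → (∀ h : N, ρ (h : G) w = c h • w) →
      w ∈ L₁ ∨ w ∈ L₂ ∨ w ∈ L₃ := by
    intro c w hw0 hc
    have hwT : w ∈ L₁ ⊔ (L₂ ⊔ L₃) := by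
      rw [codisjoint_iff.mp hcompl.codisjoint]; trivial
    obtain ⟨w₁, hw₁, z, hz, hsum⟩ := Submodule.mem_sup.mp hwT
    obtain ⟨w₂, hw₂, w₃, hw₃, hsum2⟩ := Submodule.mem_sup.mp hz
    have comp : ∀ h : N, ((χ₁ h : k) - c h) • w₁ = 0 ∧ ((χ₂ h : k) - c h) • w₂ = 0 ∧
        ((χ₃ h : k) - c h) • w₃ = 0 := by
      intro h
      have e1 : ρ (h : G) w = (χ₁ h : k) • w₁ + ((χ₂ h : k) • w₂ + (χ₃ h : k) • w₃) := by
        rw [← hsum, ← hsum2, map_add, map_add, h₁ h w₁ hw₁, h₂ h w₂ hw₂, h₃ h w₃ hw₃]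
        simp [Units.smul_def]
      have e2 : (c h : k) • w₁ + ((c h : k) • w₂ + (c h : k) • w₃) =
          (χ₁ h : k) • w₁ + ((χ₂ h : k) • w₂ + (χ₃ h : k) • w₃) := by
        rw [← e1, hc h, Units.smul_def, ← hsum, ← hsum2]
        rw [smul_add, smul_add]
      have e3 : ((χ₁ h : k) - c h) • w₁ + (((χ₂ h : k) - c h) • w₂ + ((χ₃ h : k) - c h) • w₃)
          = 0 := by
        rw [sub_smul, sub_smul, sub_smul]
        rw [← sub_eq_zero] at e2
        linear_combination (norm := module) -e2
      -- first component vanishes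
      have m1 : ((χ₁ h : k) - c h) • w₁ ∈ L₁ ⊓ (L₂ ⊔ L₃) := by
        constructor
        · exact L₁.smul_mem _ hw₁
        · have : ((χ₁ h : k) - c h) • w₁ =
              -((((χ₂ h : k) - c h) • w₂) + (((χ₃ h : k) - c h) • w₃)) := by
            linear_combination (norm := module) e3
          rw [this]
          exact neg_mem (add_mem (Submodule.mem_sup_left (L₂.smul_mem _ hw₂))
            (Submodule.mem_sup_right (L₃.smul_mem _ hw₃)))
      rw [disjoint_iff.mp hcompl.disjoint] at m1
      have z1 : ((χ₁ h : k) - c h) • w₁ = 0 := m1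
      have e4 : ((χ₂ h : k) - c h) • w₂ + ((χ₃ h : k) - c h) • w₃ = 0 := by
        linear_combination (norm := module) e3 - z1
      have m2 : ((χ₂ h : k) - c h) • w₂ ∈ L₂ ⊓ L₃ := by
        constructor
        · exact L₂.smul_mem _ hw₂
        · have : ((χ₂ h : k) - c h) • w₂ = -(((χ₃ h : k) - c h) • w₃) := by
            linear_combination (norm := module) e4
          rw [this]; exact neg_mem (L₃.smul_mem _ hw₃)
      rw [disjoint_iff.mp hcompl'.disjoint] at m2
      have z2 : ((χ₂ h : k) - c h) • w₂ = 0 := m2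
      have z3 : ((χ₃ h : k) - c h) • w₃ = 0 := by
        linear_combination (norm := module) e4 - z2
      exact ⟨z1, z2, z3⟩
    have key : ∀ (χ : N →* kˣ) (u : V), (∀ h : N, ((χ h : k) - c h) • u = 0) → u ≠ 0 →
        ∀ h : N, χ h = c h := by
      intro χ u hu hu0 h
      rcases smul_eq_zero.mp (hu h) with h0 | h0
      · exact Units.ext (sub_eq_zero.mp h0)
      · exact absurd h0 hu0
    rcases eq_or_ne w₁ 0 with hz1 | hz1
    · rcases eq_or_ne w₂ 0 with hz2 | hz2
      · rcases eq_or_ne w₃ 0 with hz3 | hz3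
        · exact absurd (by rw [← hsum, ← hsum2, hz1, hz2, hz3, add_zero, add_zero]) hw0
        · right; right
          have : w = w₃ := by rw [← hsum, ← hsum2, hz1, hz2, zero_add, zero_add]
          rw [this]; exact hw₃
      · rcases eq_or_ne w₃ 0 with hz3 | hz3
        · right; left
          have : w = w₂ := by rw [← hsum, ← hsum2, hz1, hz3, zero_add, add_zero]
          rw [this]; exact hw₂
        · exact absurd (MonoidHom.ext fun h => (key χ₂ w₂ (fun h => (comp h).2.1) hz2 h).trans
            (key χ₃ w₃ (fun h => (comp h).2.2) hz3 h).symm) hne₂₃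
    · rcases eq_or_ne w₂ 0 with hz2 | hz2
      · rcases eq_or_ne w₃ 0 with hz3 | hz3
        · left
          have : w = w₁ := by rw [← hsum, ← hsum2, hz2, hz3, add_zero, add_zero]
          rw [this]; exact hw₁
        · exact absurd (MonoidHom.ext fun h => (key χ₁ w₁ (fun h => (comp h).1) hz1 h).trans
            (key χ₃ w₃ (fun h => (comp h).2.2) hz3 h).symm) hne₁₃
      · exact absurd (MonoidHom.ext fun h => (key χ₁ w₁ (fun h => (comp h).1) hz1 h).trans
          (key χ₂ w₂ (fun h => (comp h).2.1) hz2 h).symm) hne₁₂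
  -- composing maps
  have hmul : ∀ (a b : G) (W : Submodule k V),
      Submodule.map (ρ (a * b) : V →ₗ[k] V) W = Submodule.map (ρ a : V →ₗ[k] V) (Submodule.map (ρ b : V →ₗ[k] V) W) := by
    intro a b W
    rw [map_mul]
    ext x
    constructor
    · rintro ⟨y, hy, rfl⟩; exact ⟨ρ b y, ⟨y, hy, rfl⟩, rfl⟩
    · rintro ⟨z, ⟨y, hy, rfl⟩, rfl⟩; exact ⟨y, hy, rfl⟩
  -- the image of an eigenline under any group element is one of the three lines
  have mapline : ∀ (L : Submodule k V) (χ : N →* kˣ), Module.finrank k L = 1 →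
      (∀ h : N, ∀ v ∈ L, ρ (h : G) v = χ h • v) → ∀ g : G,
      Submodule.map (ρ g : V →ₗ[k] V) L = L₁ ∨ Submodule.map (ρ g : V →ₗ[k] V) L = L₂ ∨
        Submodule.map (ρ g : V →ₗ[k] V) L = L₃ := by
    intro L χ hLr hLχ g
    obtain ⟨v, hv, hv0⟩ := Submodule.exists_mem_ne_zero_of_ne_bot (hbot L hLr)
    set w := ρ g v with hwdef
    have hw0 : w ≠ 0 := by
      simp only [hwdef, ne_eq, EmbeddingLike.map_eq_zero_iff]
      exact hv0
    have hconj : ∀ h : N, g⁻¹ * (h : G) * g ∈ N := by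
      intro h
      have := ‹N.Normal›.conj_mem (h : G) h.2 g⁻¹
      rwa [inv_inv] at this
    have hcw : ∀ h : N, ρ (h : G) w = χ ⟨g⁻¹ * (h : G) * g, hconj h⟩ • w := by
      intro h
      have e1 : ρ (h : G) w = ρ ((h : G) * g) v := by
        rw [map_mul]; rfl
      have e2 : (h : G) * g = g * (g⁻¹ * (h : G) * g) := by group
      rw [e1, e2, map_mul]
      have e3 : ρ (g⁻¹ * (h : G) * g) v = χ ⟨g⁻¹ * (h : G) * g, hconj h⟩ • v :=
        hLχ ⟨g⁻¹ * (h : G) * g, hconj h⟩ v hv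
      show ρ g (ρ (g⁻¹ * (h : G) * g) v) = _
      rw [e3, Units.smul_def, map_smul, Units.smul_def]
    have hWr : Module.finrank k (Submodule.map (ρ g : V →ₗ[k] V) L) = 1 := by
      have : Submodule.map (ρ g : V →ₗ[k] V) L = Submodule.map ((ρ g : V →ₗ[k] V)) L := rfl
      rw [this, LinearEquiv.finrank_map_eq (ρ g) L, hLr]
    have hwmem : w ∈ Submodule.map (ρ g : V →ₗ[k] V) L := ⟨v, hv, rfl⟩
    rcases eig (fun h => χ ⟨g⁻¹ * (h : G) * g, hconj h⟩) w hw0 hcw with hm | hm | hm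
    · exact Or.inl (line_eq_line_aux _ _ hWr hL₁ hw0 hwmem hm)
    · exact Or.inr (Or.inl (line_eq_line_aux _ _ hWr hL₂ hw0 hwmem hm))
    · exact Or.inr (Or.inr (line_eq_line_aux _ _ hWr hL₃ hw0 hwmem hm))
  -- existence of g₂ and g₃
  have hirr' : ∀ (W : Submodule k V), W ≠ ⊥ → Module.finrank k W ≤ 2 →
      ¬ (∀ g : G, ∀ v ∈ W, ρ g v ∈ W) := by
    intro W hWb hWr hWinv
    rcases hirr W hWinv with h | h
    · exact hWb h
    · rw [h, finrank_top, hdim] at hWr; omega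
  have hP2 : ∃ g, Submodule.map (ρ g : V →ₗ[k] V) L₁ = L₂ := by
    by_contra hP2
    push_neg at hP2
    by_cases hP3 : ∃ g, Submodule.map (ρ g : V →ₗ[k] V) L₁ = L₃
    · -- L₁ ⊔ L₃ would be invariant
      obtain ⟨g₃, hg₃⟩ := hP3
      apply hirr' (L₁ ⊔ L₃) (fun h => hbot L₁ hL₁ (le_bot_iff.mp (h ▸ le_sup_left)))
      · calc Module.finrank k ↥(L₁ ⊔ L₃) ≤ Module.finrank k ↥(L₁ ⊔ L₃) +
            Module.finrank k ↥(L₁ ⊓ L₃) := Nat.le_add_right _ _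
          _ = Module.finrank k L₁ + Module.finrank k L₃ :=
            Submodule.finrank_sup_add_finrank_inf_eq L₁ L₃
          _ = 2 := by rw [hL₁, hL₃]
      · intro g v hv
        have hmap1 : Submodule.map (ρ g : V →ₗ[k] V) L₁ = L₁ ∨ Submodule.map (ρ g : V →ₗ[k] V) L₁ = L₃ := by
          rcases mapline L₁ χ₁ hL₁ h₁ g with h | h | h
          · exact Or.inl h
          · exact absurd h (hP2 g)
          · exact Or.inr h
        have hmap3 : Submodule.map (ρ g : V →ₗ[k] V) L₃ = L₁ ∨ Submodule.map (ρ g : V →ₗ[k] V) L₃ = L₃ := by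
          rcases mapline L₃ χ₃ hL₃ h₃ g with h | h | h
          · exact Or.inl h
          · exfalso
            apply hP2 (g * g₃)
            rw [hmul, hg₃, h]
          · exact Or.inr h
        obtain ⟨a, ha, b, hb, hab⟩ := Submodule.mem_sup.mp hv
        rw [← hab, map_add]
        apply Submodule.add_mem
        · rcases hmap1 with h | h
          · exact Submodule.mem_sup_left (h ▸ ⟨a, ha, rfl⟩)
          · exact Submodule.mem_sup_right (h ▸ ⟨a, ha, rfl⟩)
        · rcases hmap3 with h | h
          · exact Submodule.mem_sup_left (h ▸ ⟨b, hb, rfl⟩)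
          · exact Submodule.mem_sup_right (h ▸ ⟨b, hb, rfl⟩)
    · -- L₁ would be invariant
      push_neg at hP3
      apply hirr' L₁ (hbot L₁ hL₁) (by rw [hL₁]; omega)
      intro g v hv
      have : Submodule.map (ρ g : V →ₗ[k] V) L₁ = L₁ := by
        rcases mapline L₁ χ₁ hL₁ h₁ g with h | h | h
        · exact h
        · exact absurd h (hP2 g)
        · exact absurd h (hP3 g)
      exact this ▸ ⟨v, hv, rfl⟩
  have hP3 : ∃ g, Submodule.map (ρ g : V →ₗ[k] V) L₁ = L₃ := by
    by_contra hP3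
    push_neg at hP3
    obtain ⟨g₂, hg₂⟩ := hP2
    apply hirr' (L₁ ⊔ L₂) (fun h => hbot L₁ hL₁ (le_bot_iff.mp (h ▸ le_sup_left)))
    · calc Module.finrank k ↥(L₁ ⊔ L₂) ≤ Module.finrank k ↥(L₁ ⊔ L₂) +
          Module.finrank k ↥(L₁ ⊓ L₂) := Nat.le_add_right _ _
        _ = Module.finrank k L₁ + Module.finrank k L₂ :=
          Submodule.finrank_sup_add_finrank_inf_eq L₁ L₂
        _ = 2 := by rw [hL₁, hL₂]
    · intro g v hv
      have hmap1 : Submodule.map (ρ g : V →ₗ[k] V) L₁ = L₁ ∨ Submodule.map (ρ g : V →ₗ[k] V) L₁ = L₂ := by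
        rcases mapline L₁ χ₁ hL₁ h₁ g with h | h | h
        · exact Or.inl h
        · exact Or.inr h
        · exact absurd h (hP3 g)
      have hmap2 : Submodule.map (ρ g : V →ₗ[k] V) L₂ = L₁ ∨ Submodule.map (ρ g : V →ₗ[k] V) L₂ = L₂ := by
        rcases mapline L₂ χ₂ hL₂ h₂ g with h | h | h
        · exact Or.inl h
        · exact Or.inr h
        · exfalso
          apply hP3 (g * g₂)
          rw [hmul, hg₂, h]
      obtain ⟨a, ha, b, hb, hab⟩ := Submodule.mem_sup.mp hv
      rw [← hab, map_add]
      apply Submodule.add_mem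
      · rcases hmap1 with h | h
        · exact Submodule.mem_sup_left (h ▸ ⟨a, ha, rfl⟩)
        · exact Submodule.mem_sup_right (h ▸ ⟨a, ha, rfl⟩)
      · rcases hmap2 with h | h
        · exact Submodule.mem_sup_left (h ▸ ⟨b, hb, rfl⟩)
        · exact Submodule.mem_sup_right (h ▸ ⟨b, hb, rfl⟩)
  obtain ⟨g₂, hg₂⟩ := hP2
  obtain ⟨g₃, hg₃⟩ := hP3
  -- the subgroup H
  have hone : ∀ (W : Submodule k V), Submodule.map (ρ 1 : V →ₗ[k] V) W = W := by
    intro W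
    rw [map_one]
    ext x
    constructor
    · rintro ⟨y, hy, rfl⟩; exact hy
    · intro hx; exact ⟨x, hx, rfl⟩
  letI act : MulAction G (Submodule k V) :=
    { smul := fun g W => Submodule.map (ρ g : V →ₗ[k] V) W
      one_smul := fun W => hone W
      mul_smul := fun a b W => hmul a b W }
  refine ⟨MulAction.stabilizer G L₁, fun g => Iff.rfl, ?_, ?_, g₂, g₃, hg₂, hg₃⟩
  · -- index 3 via orbit-stabilizer
    rw [MulAction.index_stabilizer]
    have horb : MulAction.orbit G L₁ = {L₁, L₂, L₃} := by
      ext W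
      constructor
      · rintro ⟨g, rfl⟩
        rcases mapline L₁ χ₁ hL₁ h₁ g with h | h | h
        · exact Or.inl h
        · exact Or.inr (Or.inl h)
        · exact Or.inr (Or.inr h)
      · rintro (h | h | h)
        · exact ⟨1, (hone L₁).trans h.symm⟩
        · exact ⟨g₂, hg₂.trans h.symm⟩
        · exact ⟨g₃, hg₃.trans h.symm⟩
    rw [horb]
    rw [Set.ncard_insert_of_notMem (by simp [hne12, hne13]),
      Set.ncard_pair hne23]
  · -- N ≤ H
    intro h hh
    show Submodule.map (ρ h : V →ₗ[k] V) L₁ = L₁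
    have hle : Submodule.map (ρ h : V →ₗ[k] V) L₁ ≤ L₁ := by
      rintro x ⟨v, hv, rfl⟩
      rw [LinearEquiv.coe_coe, h₁ ⟨h, hh⟩ v hv]
      exact L₁.smul_mem _ hv
    refine Submodule.eq_of_le_of_finrank_le hle ?_
    have : Submodule.map (ρ h : V →ₗ[k] V) L₁ = Submodule.map ((ρ h : V →ₗ[k] V)) L₁ := rfl
    rw [hL₁, this, LinearEquiv.finrank_map_eq (ρ h) L₁, hL₁]
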